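/- For words u and v with alph(u) = alph(v), if for every letter x in alph(u) the suffixes of u and v after the leftmost occurrence of x are k-equivalent (u[p_x+1:] ∼_k v[q_x+1:] where p_x, q_x are the leftmost occurrences of x in u and v), then u ∼_{k+1} v. -/

import Mathlib

def SF {α : Type*} (k : ℕ) (w : List α) : Set (List α) :=
  {u | u.Sublist w ∧ u.length ≤ k}

def SimEq {α : Type*} (k : ℕ) (u v : List α) : Prop := SF k u = SF k v

def alph {α : Type*} (w : List α) : Set α := {x | x ∈ w}

/-- `p` is the leftmost occurrence of the letter `x` in `w`. -/
def IsFirstOcc {α : Type*} (w : List α) (p : ℕ) (x : α) : Prop :=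
  w[p]? = some x ∧ ∀ r, r < p → w[r]? ≠ some x

private lemma exists_firstOcc {α : Type*} {w : List α} {x : α} (hx : x ∈ w) :
    ∃ p, IsFirstOcc w p x := by
  classical
  have hex : ∃ p : ℕ, w[p]? = some x := by
    obtain ⟨n, hn, hgn⟩ := List.mem_iff_getElem.mp hx
    exact ⟨n, by simp [List.getElem?_eq_getElem hn, hgn]⟩
  refine ⟨Nat.find hex, Nat.find_spec hex, fun r hr => Nat.find_min hex hr⟩

private lemma tail_sublist_drop {α : Type*} :
    ∀ (u : List α) (p : ℕ) (x : α) (t : List α), IsFirstOcc u p x →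
      (x :: t).Sublist u → t.Sublist (u.drop (p + 1))
  | [], _, _, _, _, hs => by simp at hs
  | a :: u', p, x, t, ⟨hg, hmin⟩, hs => by
    cases hs with
    | cons _ hs' =>
      cases p with
      | zero =>
        simp at hg
        subst hg
        exact ((List.sublist_cons_self a t).trans hs').trans (by simp)
      | succ p' =>
        have hfo : IsFirstOcc u' p' x := by
          constructor
          · simpa using hg
          · intro r hr hgr
            exact hmin (r + 1) (Nat.succ_lt_succ hr) (by simpa using hgr)
        simpa using tail_sublist_drop u' p' x t hfo hs'
    | cons_cons _ hs' =>
      cases p with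
      | zero => simpa using hs'
      | succ p' =>
        exact absurd (hmin 0 (Nat.succ_pos _)) (by simp_all)

private lemma cons_sublist_of_drop {α : Type*} {v : List α} {q : ℕ} {x : α} {t : List α}
    (hg : v[q]? = some x) (ht : t.Sublist (v.drop (q + 1))) : (x :: t).Sublist v := by
  have hq : q < v.length := by
    by_contra hq
    simp [List.getElem?_eq_none (Nat.le_of_not_lt hq)] at hg
  have hdrop : v.drop q = x :: v.drop (q + 1) := by
    rw [List.drop_eq_getElem_cons hq]
    have : v[q] = x := by simpa [List.getElem?_eq_getElem hq] using hg
    rw [this]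
  have : (x :: t).Sublist (v.drop q) := by
    rw [hdrop]; exact List.cons_sublist_cons.mpr ht
  exact this.trans (List.drop_sublist q v)

private lemma sf_subset {α : Type*} (k : ℕ) (u v : List α) (halph : alph u = alph v)
    (h : ∀ x ∈ alph u, ∀ p q : ℕ, IsFirstOcc u p x → IsFirstOcc v q x →
      SimEq k (u.drop (p + 1)) (v.drop (q + 1))) :
    SF (k + 1) u ⊆ SF (k + 1) v := by
  rintro s ⟨hsub, hlen⟩
  cases s with
  | nil => exact ⟨List.nil_sublist v, by simp⟩
  | cons x t =>
    have hxu : x ∈ u := hsub.subset List.mem_cons_self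
    have hxv : x ∈ v := by
      have : x ∈ alph v := halph ▸ hxu
      exact this
    obtain ⟨p, hp⟩ := exists_firstOcc hxu
    obtain ⟨q, hq⟩ := exists_firstOcc hxv
    have hsim := h x hxu p q hp hq
    have ht : t.Sublist (u.drop (p + 1)) := tail_sublist_drop u p x t hp hsub
    have htlen : t.length ≤ k := by simpa using hlen
    have : t ∈ SF k (v.drop (q + 1)) := hsim ▸ (⟨ht, htlen⟩ : t ∈ SF k (u.drop (p + 1)))
    exact ⟨cons_sublist_of_drop hq.1 this.1, by simpa using Nat.succ_le_succ this.2⟩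

/-- If alph(u) = alph(v) and for every letter x ∈ alph(u) the suffixes of u and v
after the leftmost occurrence of x are k-equivalent, then u ∼_{k+1} v. -/
theorem simEq_succ_of_first_occurrences' {α : Type*} (k : ℕ)
    (u v : List α) (halph : alph u = alph v)
    (h : ∀ x ∈ alph u, ∀ p q : ℕ, IsFirstOcc u p x → IsFirstOcc v q x →
      SimEq k (u.drop (p + 1)) (v.drop (q + 1))) :
    SimEq (k + 1) u v := by
  apply Set.Subset.antisymm
  · exact sf_subset k u v halph h
  · exact sf_subset k v u halph.symm (fun x hx p q hp hq =>
      (h x (halph ▸ hx) q p hq hp).symm)
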